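/- Let n ≥ 2 be an integer and let r : I → ℝ be a twice differentiable positive function on an open interval I containing 0 with r(0) = 1, r'(0) = 0, and satisfying r(z)·r''(z) − (n−1)(1 + r'(z)²) = 0 for all z ∈ I. Then r''(z) = (n−1)·r(z)^(2n−3) for all z ∈ I. -/

import Mathlib

/-- For a normalized n-catenoid profile function `r` (positive, twice
differentiable on an open interval `I` containing `0`, with `r 0 = 1`, `r' 0 = 0`,
satisfying `r·r'' − (n−1)(1 + r'²) = 0`), the second-order identity
`r'' = (n−1)·r^(2n−3)` holds on `I`. -/
theorem catenoid_profile_second_deriv (n : ℕ) (hn : 2 ≤ n)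
    (I : Set ℝ) (hIopen : IsOpen I) (hIconn : I.OrdConnected) (h0I : (0 : ℝ) ∈ I)
    (r : ℝ → ℝ)
    (hpos : ∀ z ∈ I, 0 < r z)
    (hdiff : ∀ z ∈ I, DifferentiableAt ℝ r z ∧ DifferentiableAt ℝ (deriv r) z)
    (hr0 : r 0 = 1) (hr'0 : deriv r 0 = 0)
    (hode : ∀ z ∈ I,
      r z * deriv (deriv r) z - ((n : ℝ) - 1) * (1 + (deriv r z) ^ 2) = 0) :
    ∀ z ∈ I, deriv (deriv r) z = ((n : ℝ) - 1) * (r z) ^ (2 * n - 3) := by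
  have hconv : Convex ℝ I := convex_iff_ordConnected.mpr hIconn
  set G : ℝ → ℝ := fun z => (1 + (deriv r z) ^ 2) / (r z) ^ (2 * n - 2) with hG
  have he1 : 2 * n - 2 - 1 = 2 * n - 3 := by omega
  have he2 : 2 * n - 2 = (2 * n - 3) + 1 := by omega
  have hGderiv : ∀ z ∈ I, HasDerivAt G 0 z := by
    intro z hz
    have hu : HasDerivAt (fun z => 1 + (deriv r z) ^ 2)
        (0 + 2 * deriv r z ^ 1 * deriv (deriv r) z) z :=
      (hasDerivAt_const z 1).add (((hdiff z hz).2.hasDerivAt).pow 2)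
    have hv : HasDerivAt (fun z => (r z) ^ (2 * n - 2))
        ((2 * n - 2 : ℕ) * r z ^ (2 * n - 2 - 1) * deriv r z) z :=
      ((hdiff z hz).1.hasDerivAt).pow (2 * n - 2)
    have hvne : (r z) ^ (2 * n - 2) ≠ 0 := pow_ne_zero _ (hpos z hz).ne'
    have hcast : ((2 * n - 2 : ℕ) : ℝ) = 2 * ((n : ℝ) - 1) := by
      have h : (2 * n - 2 : ℕ) = 2 * (n - 1) := by omega
      rw [h]; push_cast [Nat.cast_sub (by omega : 1 ≤ n)]; ring
    have hpow : r z ^ (2 * n - 2) = r z ^ (2 * n - 3) * r z := by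
      rw [he2, pow_succ]
    have hnum : (0 + 2 * deriv r z ^ 1 * deriv (deriv r) z) * r z ^ (2 * n - 2) -
        (1 + deriv r z ^ 2) * ((2 * n - 2 : ℕ) * r z ^ (2 * n - 2 - 1) * deriv r z) = 0 := by
      rw [he1, hpow, hcast]
      linear_combination (2 * deriv r z * r z ^ (2 * n - 3)) * hode z hz
    have h2 := hu.div hv hvne
    rw [hnum, zero_div] at h2
    exact h2
  have hGconst : ∀ z ∈ I, G z = G 0 := by
    intro z hz
    refine hconv.is_const_of_fderivWithin_eq_zero (f := G)
      (fun x hx => (hGderiv x hx).differentiableAt.differentiableWithinAt) ?_ hz h0I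
    intro x hx
    rw [fderivWithin_of_isOpen hIopen hx, (hGderiv x hx).hasFDerivAt.fderiv]
    ext
    simp
  have hG0 : G 0 = 1 := by
    simp [hG, hr0, hr'0]
  have hfirst : ∀ z ∈ I, 1 + (deriv r z) ^ 2 = (r z) ^ (2 * n - 2) := by
    intro z hz
    have h1 := (hGconst z hz).trans hG0
    have hvne : (r z) ^ (2 * n - 2) ≠ 0 := pow_ne_zero _ (hpos z hz).ne'
    simp only [hG] at h1
    field_simp at h1
    linarith [h1]
  intro z hz
  have h1 := hfirst z hz
  have hpow : r z ^ (2 * n - 2) = r z ^ (2 * n - 3) * r z := by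
    rw [he2, pow_succ]
  have hrne : r z ≠ 0 := (hpos z hz).ne'
  apply mul_left_cancel₀ hrne
  rw [show r z * (((n : ℝ) - 1) * r z ^ (2 * n - 3)) =
      ((n : ℝ) - 1) * (r z ^ (2 * n - 3) * r z) by ring, ← hpow, ← h1]
  linarith [hode z hz]
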